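/- Let a > b > 0 be real numbers and let (F_n)_{n≥0} be the sequence of continuous functions on [0,1] defined by F₀(x) = 1 and F_n = a·L*(F_{n-1}) + b·L(F_{n-1}) for n ≥ 1. Then there exists t₀ > 0 such that for all real t with 0 < |t| < t₀, Σ_{n=0}^∞ t^{n+1}·∫₀¹ F_n(x) dx = (e^{(a−b)t} − 1)/(a − b·e^{(a−b)t}). -/

import Mathlib

open MeasureTheory

private lemma sif_summable_base {q : ℝ} (hq0 : 0 ≤ q) (hq1 : q < 1) (n : ℕ) :
    Summable (fun m : ℕ => q ^ m * (1 + (m : ℝ)) ^ n) := by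
  have h : (fun m : ℕ => q ^ m * (1 + (m : ℝ)) ^ n)
      = fun m : ℕ => ∑ j ∈ Finset.range (n + 1),
          (n.choose j : ℝ) * ((m : ℝ) ^ j * q ^ m) := by
    funext m
    rw [add_comm (1 : ℝ), add_pow, Finset.mul_sum]
    refine Finset.sum_congr rfl fun j hj => ?_
    simp [one_pow]
    ring
  rw [h]
  exact summable_sum fun j _ =>
    ((summable_pow_mul_geometric_of_norm_lt_one (R := ℝ) j
      (by rwa [Real.norm_eq_abs, abs_of_nonneg hq0])).mul_left _)

private lemma sif_summable {q : ℝ} (hq0 : 0 ≤ q) (hq1 : q < 1) (n : ℕ) {x : ℝ}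
    (hx0 : 0 ≤ x) (hx1 : x ≤ 1) :
    Summable (fun m : ℕ => q ^ m * (x + (m : ℝ)) ^ n) := by
  refine Summable.of_nonneg_of_le (fun m => by positivity) (fun m => ?_)
    (sif_summable_base hq0 hq1 n)
  have h1 : (0 : ℝ) ≤ x + m := by positivity
  exact mul_le_mul_of_nonneg_left (pow_le_pow_left₀ h1 (by linarith) n) (by positivity)

private lemma sif_integral {q : ℝ} (hq0 : 0 ≤ q) (hq1 : q < 1) (n : ℕ) {u v : ℝ}
    (hu0 : 0 ≤ u) (huv : u ≤ v) (hv1 : v ≤ 1) :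
    ∫ t in u..v, ∑' m : ℕ, q ^ m * (t + (m : ℝ)) ^ n
      = ∑' m : ℕ, q ^ m * (((v + (m : ℝ)) ^ (n + 1) - (u + (m : ℝ)) ^ (n + 1)) / (n + 1)) := by
  have key : ∀ m : ℕ, ∫ t in Set.Ioc u v, q ^ m * (t + (m : ℝ)) ^ n
      = q ^ m * (((v + (m : ℝ)) ^ (n + 1) - (u + (m : ℝ)) ^ (n + 1)) / (n + 1)) := by
    intro m
    rw [← intervalIntegral.integral_of_le huv, intervalIntegral.integral_const_mul,
      intervalIntegral.integral_comp_add_right (fun y => y ^ n) (m : ℝ), integral_pow]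
  have hint : ∀ m : ℕ, IntegrableOn (fun t => q ^ m * (t + (m : ℝ)) ^ n) (Set.Ioc u v) :=
    fun m => Continuous.integrableOn_Ioc (by fun_prop)
  have hval : ∀ m : ℕ, ∀ t ∈ Set.Ioc u v, ‖q ^ m * (t + (m : ℝ)) ^ n‖ = q ^ m * (t + (m : ℝ)) ^ n := by
    intro m t ht
    have h0t : 0 ≤ t := le_trans hu0 (le_of_lt ht.1)
    exact Real.norm_of_nonneg (by positivity)
  have hsum : Summable fun m : ℕ => ∫ t in Set.Ioc u v, ‖q ^ m * (t + (m : ℝ)) ^ n‖ := by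
    have heq : ∀ m : ℕ, (∫ t in Set.Ioc u v, ‖q ^ m * (t + (m : ℝ)) ^ n‖)
        = q ^ m * (((v + (m : ℝ)) ^ (n + 1) - (u + (m : ℝ)) ^ (n + 1)) / (n + 1)) := by
      intro m
      rw [setIntegral_congr_fun measurableSet_Ioc (fun t ht => hval m t ht), key m]
    simp only [heq]
    refine Summable.of_nonneg_of_le (fun m => ?_) (fun m => ?_)
      (sif_summable_base hq0 hq1 (n + 1))
    · have h1 : (0 : ℝ) ≤ u + m := by positivity
      have h2 : u + (m : ℝ) ≤ v + m := by linarith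
      have h3 := pow_le_pow_left₀ h1 h2 (n + 1)
      have h4 : (0 : ℝ) < (n : ℝ) + 1 := by positivity
      have := div_nonneg (by linarith : (0:ℝ) ≤ (v + (m : ℝ)) ^ (n + 1) - (u + (m : ℝ)) ^ (n + 1)) h4.le
      positivity
    · have h1 : (0 : ℝ) ≤ u + m := by positivity
      have h2 : u + (m : ℝ) ≤ v + m := by linarith
      have h3 := pow_le_pow_left₀ h1 h2 (n + 1)
      have h5 : (v + (m : ℝ)) ^ (n + 1) ≤ (1 + (m : ℝ)) ^ (n + 1) :=
        pow_le_pow_left₀ (add_nonneg (hu0.trans huv) (Nat.cast_nonneg m)) (by linarith) _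
      have h6 : ((v + (m : ℝ)) ^ (n + 1) - (u + (m : ℝ)) ^ (n + 1)) / ((n : ℝ) + 1)
          ≤ (v + (m : ℝ)) ^ (n + 1) - (u + (m : ℝ)) ^ (n + 1) :=
        div_le_self (by linarith) (by norm_num)
      have h7 : ((v + (m : ℝ)) ^ (n + 1) - (u + (m : ℝ)) ^ (n + 1)) / ((n : ℝ) + 1)
          ≤ (1 + (m : ℝ)) ^ (n + 1) := by
        have h8 : (0 : ℝ) ≤ (u + (m : ℝ)) ^ (n + 1) := by positivity
        linarith
      exact mul_le_mul_of_nonneg_left h7 (by positivity)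
  rw [intervalIntegral.integral_of_le huv,
    ← MeasureTheory.integral_tsum_of_summable_integral_norm hint hsum]
  exact tsum_congr key

private lemma sif_shift {q a b : ℝ} (ha : 0 < a) (hb : 0 < b) (hba : b < a) (hq : q = b / a)
    (k : ℕ) :
    b * ∑' m : ℕ, q ^ m * (1 + (m : ℝ)) ^ (k + 1)
      = a * ∑' m : ℕ, q ^ m * ((0 : ℝ) + (m : ℝ)) ^ (k + 1) := by
  have hq0 : 0 ≤ q := by rw [hq]; positivity
  have hq1 : q < 1 := by rw [hq, div_lt_one ha]; exact hba
  have hs : Summable (fun m : ℕ => q ^ m * ((0 : ℝ) + (m : ℝ)) ^ (k + 1)) :=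
    sif_summable hq0 hq1 (k + 1) le_rfl zero_le_one
  have hqa : q * a = b := by rw [hq]; field_simp
  rw [← tsum_mul_left, ← tsum_mul_left, Summable.tsum_eq_zero_add (hs.mul_left a)]
  simp only [Nat.cast_zero, add_zero, zero_add, zero_pow (Nat.succ_ne_zero k), mul_zero]
  refine tsum_congr fun m => ?_
  push_cast
  have h : q ^ (m + 1) = q ^ m * q := pow_succ q m
  rw [h]
  linear_combination (-(q ^ m * (1 + (m : ℝ)) ^ (k + 1))) * hqa

private lemma sif_formula (a b : ℝ) (hb : 0 < b) (hab : b < a)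
    (F : ℕ → ℝ → ℝ)
    (hF0 : ∀ x ∈ Set.Icc (0 : ℝ) 1, F 0 x = 1)
    (hFrec : ∀ n, ∀ x ∈ Set.Icc (0 : ℝ) 1,
      F (n + 1) x = a * (∫ t in (0 : ℝ)..x, F n t) + b * ∫ t in x..(1 : ℝ), F n t) :
    ∀ n, ∀ x ∈ Set.Icc (0 : ℝ) 1,
      F n x = (a - b) ^ (n + 1) / (a * n.factorial) *
        ∑' m : ℕ, (b / a) ^ m * (x + (m : ℝ)) ^ n := by
  have ha : 0 < a := hb.trans hab
  have hd : (0 : ℝ) < a - b := by linarith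
  have hq0 : (0 : ℝ) ≤ b / a := by positivity
  have hq1 : b / a < 1 := (div_lt_one ha).2 hab
  intro n
  induction n with
  | zero =>
    intro x hx
    rw [hF0 x hx]
    simp only [pow_zero, mul_one, pow_one, Nat.factorial_zero, Nat.cast_one]
    rw [tsum_geometric_of_lt_one hq0 hq1]
    have h1 : 1 - b / a = (a - b) / a := by field_simp
    rw [h1]
    field_simp
    ring
  | succ n ih =>
    intro x hx
    obtain ⟨hx0, hx1⟩ := hx
    have key : ∀ u v : ℝ, 0 ≤ u → u ≤ v → v ≤ 1 →
        ∫ t in u..v, F n t = (a - b) ^ (n + 1) / (a * n.factorial) *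
          ∑' m : ℕ, (b / a) ^ m *
            (((v + (m : ℝ)) ^ (n + 1) - (u + (m : ℝ)) ^ (n + 1)) / (n + 1)) := by
      intro u v h1 h2 h3
      have hcongr : ∫ t in u..v, F n t
          = ∫ t in u..v, (a - b) ^ (n + 1) / (a * n.factorial) *
              ∑' m : ℕ, (b / a) ^ m * (t + (m : ℝ)) ^ n := by
        apply intervalIntegral.integral_congr
        intro t ht
        rw [Set.uIcc_of_le h2] at ht
        exact ih t ⟨le_trans h1 ht.1, le_trans ht.2 h3⟩
      rw [hcongr, intervalIntegral.integral_const_mul, sif_integral hq0 hq1 n h1 h2 h3]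
    rw [hFrec n x ⟨hx0, hx1⟩, key 0 x le_rfl hx0 hx1, key x 1 hx0 hx1 le_rfl]
    have s1 : Summable (fun m : ℕ => (b / a) ^ m * (x + (m : ℝ)) ^ (n + 1)) :=
      sif_summable hq0 hq1 (n + 1) hx0 hx1
    have s0 : Summable (fun m : ℕ => (b / a) ^ m * ((0 : ℝ) + (m : ℝ)) ^ (n + 1)) :=
      sif_summable hq0 hq1 (n + 1) le_rfl zero_le_one
    have s2 : Summable (fun m : ℕ => (b / a) ^ m * ((1 : ℝ) + (m : ℝ)) ^ (n + 1)) :=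
      sif_summable hq0 hq1 (n + 1) zero_le_one le_rfl
    have e1 : ∑' m : ℕ, (b / a) ^ m *
          (((x + (m : ℝ)) ^ (n + 1) - ((0 : ℝ) + (m : ℝ)) ^ (n + 1)) / (n + 1))
        = ((∑' m : ℕ, (b / a) ^ m * (x + (m : ℝ)) ^ (n + 1))
            - ∑' m : ℕ, (b / a) ^ m * ((0 : ℝ) + (m : ℝ)) ^ (n + 1)) / ((n : ℝ) + 1) := by
      rw [← Summable.tsum_sub s1 s0, ← tsum_div_const]
      exact tsum_congr fun m => by ring
    have e2 : ∑' m : ℕ, (b / a) ^ m *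
          ((((1 : ℝ) + (m : ℝ)) ^ (n + 1) - (x + (m : ℝ)) ^ (n + 1)) / (n + 1))
        = ((∑' m : ℕ, (b / a) ^ m * ((1 : ℝ) + (m : ℝ)) ^ (n + 1))
            - ∑' m : ℕ, (b / a) ^ m * (x + (m : ℝ)) ^ (n + 1)) / ((n : ℝ) + 1) := by
      rw [← Summable.tsum_sub s2 s1, ← tsum_div_const]
      exact tsum_congr fun m => by ring
    rw [e1, e2]
    have hshift := sif_shift ha hb hab rfl n
    set T1 := ∑' m : ℕ, (b / a) ^ m * (x + (m : ℝ)) ^ (n + 1) with hT1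
    set T0 := ∑' m : ℕ, (b / a) ^ m * ((0 : ℝ) + (m : ℝ)) ^ (n + 1) with hT0
    set T2 := ∑' m : ℕ, (b / a) ^ m * ((1 : ℝ) + (m : ℝ)) ^ (n + 1) with hT2
    have hN : ((n : ℝ) + 1) ≠ 0 := by positivity
    have hK : ((n.factorial : ℝ)) ≠ 0 := Nat.cast_ne_zero.2 n.factorial_ne_zero
    rw [Nat.factorial_succ]
    push_cast
    have hT0eq : T0 = b * T2 / a := by
      rw [eq_div_iff ha.ne']
      linarith [hshift]
    rw [hT0eq]
    field_simp
    ring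

private lemma sif_exp_tsum (z : ℝ) :
    ∑' n : ℕ, z ^ (n + 1) / (n + 1).factorial = Real.exp z - 1 := by
  have h0 : Real.exp z = ∑' n : ℕ, z ^ n / n.factorial := by
    rw [Real.exp_eq_exp_ℝ, NormedSpace.exp_eq_tsum_div]
  rw [Summable.tsum_eq_zero_add (Real.summable_pow_div_factorial z)] at h0
  simp only [pow_zero, Nat.factorial_zero, Nat.cast_one, div_one] at h0
  linarith [h0]

set_option maxHeartbeats 1000000 in
theorem sum_integral_F_eq (a b : ℝ) (hb : 0 < b) (hab : b < a)
    (F : ℕ → ℝ → ℝ)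
    (hFcont : ∀ n, ContinuousOn (F n) (Set.Icc 0 1))
    (hF0 : ∀ x ∈ Set.Icc (0:ℝ) 1, F 0 x = 1)
    (hFrec : ∀ n, ∀ x ∈ Set.Icc (0:ℝ) 1,
      F (n + 1) x = a * (∫ t in (0:ℝ)..x, F n t) + b * ∫ t in x..(1:ℝ), F n t) :
    ∃ t₀ : ℝ, 0 < t₀ ∧ ∀ t : ℝ, 0 < |t| → |t| < t₀ →
      ∑' n : ℕ, t ^ (n + 1) * ∫ x in (0:ℝ)..1, F n x =
        (Real.exp ((a - b) * t) - 1) / (a - b * Real.exp ((a - b) * t)) := by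
  have ha : 0 < a := hb.trans hab
  have hd : (0 : ℝ) < a - b := by linarith
  have hq0 : (0 : ℝ) ≤ b / a := by positivity
  have hqpos : (0 : ℝ) < b / a := by positivity
  have hq1 : b / a < 1 := (div_lt_one ha).2 hab
  set L := Real.log (a / b) with hL
  have hL0 : 0 < L := Real.log_pos ((one_lt_div hb).2 hab)
  refine ⟨L / (2 * (a - b)), by positivity, ?_⟩
  intro t ht0 ht1
  set E := Real.exp ((a - b) * t) with hE
  have hE0 : 0 < E := Real.exp_pos _
  have habs : (a - b) * t ≤ (a - b) * |t| := mul_le_mul_of_nonneg_left (le_abs_self t) hd.le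
  have hhalf : (a - b) * |t| < L / 2 := by
    have h := mul_lt_mul_of_pos_left ht1 hd
    calc (a - b) * |t| < (a - b) * (L / (2 * (a - b))) := h
      _ = L / 2 := by field_simp
  have hE1 : E < a / b := by
    rw [hE, ← Real.exp_log (show (0 : ℝ) < a / b by positivity)]
    exact Real.exp_lt_exp.2 (by rw [← hL]; linarith)
  have hbE : b * E < a := by
    have h := mul_lt_mul_of_pos_left hE1 hb
    rwa [mul_div_cancel₀ a hb.ne'] at h
  have hqE : b / a * E < 1 := by
    rw [div_mul_eq_mul_div, div_lt_one ha]
    linarith [hbE]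
  have hqE0 : (0 : ℝ) ≤ b / a * E := by positivity
  -- the double-indexed family
  set f : ℕ → ℕ → ℝ := fun n m =>
    (b / a) ^ m / a * (((a - b) * t * (1 + (m : ℝ))) ^ (n + 1) / (n + 1).factorial
      - ((a - b) * t * (m : ℝ)) ^ (n + 1) / (n + 1).factorial) with hf
  -- Step 1: each term of the outer sum
  have hterm : ∀ n : ℕ, t ^ (n + 1) * ∫ x in (0:ℝ)..1, F n x = ∑' m : ℕ, f n m := by
    intro n
    have hint : ∫ x in (0:ℝ)..1, F n x
        = (a - b) ^ (n + 1) / (a * n.factorial) *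
          ∑' m : ℕ, (b / a) ^ m *
            ((((1 : ℝ) + (m : ℝ)) ^ (n + 1) - ((0 : ℝ) + (m : ℝ)) ^ (n + 1)) / (n + 1)) := by
      have hcongr : ∫ x in (0:ℝ)..1, F n x
          = ∫ x in (0:ℝ)..1, (a - b) ^ (n + 1) / (a * n.factorial) *
              ∑' m : ℕ, (b / a) ^ m * (x + (m : ℝ)) ^ n := by
        apply intervalIntegral.integral_congr
        intro y hy
        rw [Set.uIcc_of_le zero_le_one] at hy
        exact sif_formula a b hb hab F hF0 hFrec n y hy
      rw [hcongr, intervalIntegral.integral_const_mul,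
        sif_integral hq0 hq1 n le_rfl zero_le_one le_rfl]
    rw [hint, ← mul_assoc, ← tsum_mul_left]
    refine tsum_congr fun m => ?_
    have hN : ((n : ℝ) + 1) ≠ 0 := by positivity
    have hK : ((n.factorial : ℝ)) ≠ 0 := Nat.cast_ne_zero.2 n.factorial_ne_zero
    simp only [hf, mul_pow]
    rw [Nat.factorial_succ]
    push_cast
    field_simp
    ring
  -- Step 2: summability of the double family
  set θ : ℝ := 3 * L / (4 * (a - b)) with hθ
  have hθ0 : 0 < θ := by positivity
  have hrθ : |t| / θ < 1 := by
    rw [div_lt_one hθ0]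
    calc |t| < L / (2 * (a - b)) := ht1
      _ ≤ θ := by
        rw [hθ, div_le_div_iff₀ (by positivity) (by positivity)]
        nlinarith
  have hrθ0 : (0 : ℝ) ≤ |t| / θ := by positivity
  set ρ : ℝ := b / a * Real.exp ((a - b) * θ) with hρ
  have hρ0 : (0 : ℝ) ≤ ρ := by positivity
  have hρ1 : ρ < 1 := by
    have h1 : Real.exp ((a - b) * θ) < a / b := by
      rw [← Real.exp_log (show (0 : ℝ) < a / b by positivity)]
      apply Real.exp_lt_exp.2
      have hθval : (a - b) * θ = 3 * L / 4 := by
        rw [hθ]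
        field_simp
      rw [← hL, hθval]
      linarith
    calc ρ = b / a * Real.exp ((a - b) * θ) := rfl
      _ < b / a * (a / b) := by exact mul_lt_mul_of_pos_left h1 hqpos
      _ = 1 := by field_simp
  have hexpθm : ∀ m : ℕ, Real.exp ((a - b) * θ * (1 + (m : ℝ)))
      = Real.exp ((a - b) * θ) * (Real.exp ((a - b) * θ)) ^ m := by
    intro m
    rw [show (a - b) * θ * (1 + (m : ℝ)) = (a - b) * θ + (m : ℝ) * ((a - b) * θ) by ring,
      Real.exp_add, Real.exp_nat_mul]
  have hbound : ∀ n m : ℕ, |f n m|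
      ≤ 2 * Real.exp ((a - b) * θ) / a * (|t| / θ) ^ (n + 1) * ρ ^ m := by
    intro n m
    have hfacpos : (0 : ℝ) < ((n + 1).factorial : ℝ) := by
      exact_mod_cast Nat.factorial_pos (n + 1)
    have hA : |((a - b) * t * (1 + (m : ℝ))) ^ (n + 1)|
        = ((a - b) * |t| * (1 + (m : ℝ))) ^ (n + 1) := by
      rw [abs_pow, abs_mul, abs_mul, abs_of_nonneg hd.le,
        abs_of_nonneg (by positivity : (0:ℝ) ≤ 1 + (m : ℝ))]
    have hB : |((a - b) * t * (m : ℝ)) ^ (n + 1)|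
        = ((a - b) * |t| * (m : ℝ)) ^ (n + 1) := by
      rw [abs_pow, abs_mul, abs_mul, abs_of_nonneg hd.le,
        abs_of_nonneg (by positivity : (0:ℝ) ≤ (m : ℝ))]
    have hBle : ((a - b) * |t| * (m : ℝ)) ^ (n + 1)
        ≤ ((a - b) * |t| * (1 + (m : ℝ))) ^ (n + 1) := by
      apply pow_le_pow_left₀ (by positivity)
      nlinarith [abs_nonneg t, hd.le]
    have hfabs : |f n m| ≤ (b / a) ^ m / a *
        (2 * ((a - b) * |t| * (1 + (m : ℝ))) ^ (n + 1) / ((n + 1).factorial : ℝ)) := by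
      rw [hf]
      simp only
      rw [abs_mul, abs_of_nonneg (by positivity : (0 : ℝ) ≤ (b / a) ^ m / a)]
      apply mul_le_mul_of_nonneg_left _ (by positivity)
      calc |((a - b) * t * (1 + (m : ℝ))) ^ (n + 1) / ((n + 1).factorial : ℝ)
            - ((a - b) * t * (m : ℝ)) ^ (n + 1) / ((n + 1).factorial : ℝ)|
          ≤ |((a - b) * t * (1 + (m : ℝ))) ^ (n + 1) / ((n + 1).factorial : ℝ)|
            + |((a - b) * t * (m : ℝ)) ^ (n + 1) / ((n + 1).factorial : ℝ)| := abs_sub _ _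
        _ = (((a - b) * |t| * (1 + (m : ℝ))) ^ (n + 1)
              + ((a - b) * |t| * (m : ℝ)) ^ (n + 1)) / ((n + 1).factorial : ℝ) := by
            rw [abs_div, abs_div, hA, hB, abs_of_pos hfacpos, add_div]
        _ ≤ 2 * ((a - b) * |t| * (1 + (m : ℝ))) ^ (n + 1) / ((n + 1).factorial : ℝ) := by
            gcongr
            linarith [hBle]
    have hkey : ((a - b) * |t| * (1 + (m : ℝ))) ^ (n + 1) / ((n + 1).factorial : ℝ)
        ≤ (|t| / θ) ^ (n + 1) * Real.exp ((a - b) * θ * (1 + (m : ℝ))) := by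
      have hrw : (a - b) * |t| * (1 + (m : ℝ))
          = (|t| / θ) * ((a - b) * θ * (1 + (m : ℝ))) := by
        field_simp
      rw [hrw, mul_pow, mul_div_assoc]
      apply mul_le_mul_of_nonneg_left _ (by positivity)
      exact Real.pow_div_factorial_le_exp _ (by positivity) (n + 1)
    calc |f n m| ≤ (b / a) ^ m / a *
          (2 * ((a - b) * |t| * (1 + (m : ℝ))) ^ (n + 1) / ((n + 1).factorial : ℝ)) := hfabs
      _ = (b / a) ^ m / a * 2 *
          (((a - b) * |t| * (1 + (m : ℝ))) ^ (n + 1) / ((n + 1).factorial : ℝ)) := by ring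
      _ ≤ (b / a) ^ m / a * 2 *
          ((|t| / θ) ^ (n + 1) * Real.exp ((a - b) * θ * (1 + (m : ℝ)))) := by
          apply mul_le_mul_of_nonneg_left hkey (by positivity)
      _ = 2 * Real.exp ((a - b) * θ) / a * (|t| / θ) ^ (n + 1) * ρ ^ m := by
          rw [hexpθm m, hρ, mul_pow]
          ring
  have hg_sum : Summable (fun p : ℕ × ℕ =>
      2 * Real.exp ((a - b) * θ) / a * (|t| / θ) ^ (p.1 + 1) * ρ ^ p.2) := by
    have h1 : Summable (fun n : ℕ => 2 * Real.exp ((a - b) * θ) / a * (|t| / θ) ^ (n + 1)) := by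
      have h2 : Summable (fun n : ℕ => (|t| / θ) ^ n) :=
        summable_geometric_of_lt_one hrθ0 hrθ
      have h3 := (h2.mul_left (2 * Real.exp ((a - b) * θ) / a * (|t| / θ)))
      refine h3.congr fun n => ?_
      rw [pow_succ]
      ring
    have h2 : Summable (fun m : ℕ => ρ ^ m) := summable_geometric_of_lt_one hρ0 hρ1
    exact h1.mul_of_nonneg h2 (fun n => by positivity) (fun m => by positivity)
  have hf_sum : Summable (Function.uncurry f) := by
    apply Summable.of_norm_bounded hg_sum
    intro p
    rw [Real.norm_eq_abs]
    exact hbound p.1 p.2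
  have hswap : ∑' m : ℕ, ∑' n : ℕ, f n m = ∑' n : ℕ, ∑' m : ℕ, f n m :=
    Summable.tsum_comm' hf_sum (fun n => hf_sum.prod_factor n) (fun m => hf_sum.prod_symm.prod_factor m)
  -- Step 3: inner sums
  have hinner : ∀ m : ℕ, ∑' n : ℕ, f n m = (E - 1) / a * (b / a * E) ^ m := by
    intro m
    have hsum1 : Summable (fun n : ℕ =>
        ((a - b) * t * (1 + (m : ℝ))) ^ (n + 1) / ((n + 1).factorial : ℝ)) :=
      (summable_nat_add_iff 1).2 (Real.summable_pow_div_factorial _)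
    have hsum2 : Summable (fun n : ℕ =>
        ((a - b) * t * (m : ℝ)) ^ (n + 1) / ((n + 1).factorial : ℝ)) :=
      (summable_nat_add_iff 1).2 (Real.summable_pow_div_factorial _)
    simp only [hf]
    rw [tsum_mul_left, Summable.tsum_sub hsum1 hsum2, sif_exp_tsum, sif_exp_tsum]
    rw [show (a - b) * t * (1 + (m : ℝ)) = (a - b) * t + (m : ℝ) * ((a - b) * t) by ring,
      Real.exp_add,
      show (a - b) * t * (m : ℝ) = (m : ℝ) * ((a - b) * t) by ring,
      Real.exp_nat_mul, mul_pow, ← hE]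
    ring
  -- assemble
  calc ∑' n : ℕ, t ^ (n + 1) * ∫ x in (0:ℝ)..1, F n x
      = ∑' n : ℕ, ∑' m : ℕ, f n m := tsum_congr hterm
    _ = ∑' m : ℕ, ∑' n : ℕ, f n m := hswap.symm
    _ = ∑' m : ℕ, (E - 1) / a * (b / a * E) ^ m := tsum_congr hinner
    _ = (E - 1) / a * (1 - b / a * E)⁻¹ := by
        rw [tsum_mul_left, tsum_geometric_of_lt_one hqE0 hqE]
    _ = (E - 1) / (a - b * E) := by
        have h1 : 1 - b / a * E ≠ 0 := by
          have := hqE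
          intro h
          nlinarith [hqE]
        have h2 : a - b * E ≠ 0 := by intro h; nlinarith [hbE]
        field_simp
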